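/- arXiv:2305.03018 — 3 statements merged into one kernel-verified Lean document; each statement's English description precedes it below -/
import Mathlib

section
/- Let f, b : (Fin N → ℤ) → WithBot ℕ be an image and a filter, each with finite support (F = {x | f x ≠ ⊥} and B = {y | b y ≠ ⊥} finite). Then for every x ∈ ℤ^N, the dilation value equals a polynomial degree: (f ⊕ b)(x) = degree( Σ_{y ∈ B} δ′(f(x − y)) · δ′(b(y)) ), where (f ⊕ b)(x) = sup_{y ∈ ℤ^N} ( f(x − y) + b(y) ) is the supremum in WithBot ℕ, the sum of polynomials is over the finite set B, and in particular both sides are ⊥ when no y ∈ B has x − y ∈ F. -/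
open Polynomial

/-- `δ′ : WithBot ℕ → ℝ[X]` sends `⊥` to the zero polynomial and `a : ℕ` to `X ^ a`. -/
noncomputable def deltaInv : WithBot ℕ → ℝ[X] :=
  WithBot.recBotCoe 0 (fun a => X ^ a)

lemma deltaInv_degree (u : WithBot ℕ) : (deltaInv u).degree = u := by
  induction u using WithBot.recBotCoe with
  | bot => simp [deltaInv]
  | coe a => simp [deltaInv, degree_X_pow, Nat.cast_withBot]

lemma deltaInv_mul (u v : WithBot ℕ) : deltaInv u * deltaInv v = deltaInv (u + v) := by
  induction u using WithBot.recBotCoe with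
  | bot => simp [deltaInv]
  | coe a =>
    induction v using WithBot.recBotCoe with
    | bot => simp [deltaInv]
    | coe c => simp [deltaInv, ← WithBot.coe_add, pow_add]

lemma deltaInv_coeff (u : WithBot ℕ) (n : ℕ) :
    (deltaInv u).coeff n = if u = WithBot.some n then 1 else 0 := by
  induction u using WithBot.recBotCoe with
  | bot => simp [deltaInv]
  | coe a =>
    simp only [deltaInv, WithBot.recBotCoe_coe, coeff_X_pow]
    by_cases h : a = n <;> simp [h, eq_comm, WithBot.coe_eq_coe]

lemma degree_sum_deltaInv {ι : Type*} (s : Finset ι) (h : ι → WithBot ℕ) :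
    (∑ y ∈ s, deltaInv (h y)).degree = s.sup h := by
  apply le_antisymm
  · refine (degree_sum_le _ _).trans ?_
    apply Finset.sup_le
    intro y hy
    rw [deltaInv_degree]
    exact Finset.le_sup hy
  · apply Finset.sup_le
    intro y hy
    rcases hu : h y with _ | n
    · exact bot_le
    · apply le_degree_of_ne_zero
      rw [finset_sum_coeff]
      have hnonneg : ∀ z ∈ s, (0:ℝ) ≤ (deltaInv (h z)).coeff n := by
        intro z _
        rw [deltaInv_coeff]
        split <;> norm_num
      have hpos : (0:ℝ) < (deltaInv (h y)).coeff n := by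
        rw [deltaInv_coeff, hu, if_pos (by rfl)]; norm_num
      exact ne_of_gt (Finset.sum_pos' hnonneg ⟨y, hy, hpos⟩)

/-- For an image `f` and a filter `b` on `ℤ^N` with values in `WithBot ℕ` and finite
supports, the dilation value `(f ⊕ b)(x) = ⨆ y, f (x - y) + b y` equals the degree of
the polynomial `∑_{y ∈ B} δ′(f (x - y)) * δ′(b y)`, where `B` is the support of `b`. -/
theorem dilation_eq_degree_sum (N : ℕ) (f b : (Fin N → ℤ) → WithBot ℕ)
    (hF : {x : Fin N → ℤ | f x ≠ ⊥}.Finite) (hB : {y : Fin N → ℤ | b y ≠ ⊥}.Finite)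
    (x : Fin N → ℤ) :
    (⨆ y : Fin N → ℤ, f (x - y) + b y) =
      (∑ y ∈ hB.toFinset, deltaInv (f (x - y)) * deltaInv (b y)).degree := by
  set g : (Fin N → ℤ) → WithBot ℕ := fun y => f (x - y) + b y with hg
  have hsum : (∑ y ∈ hB.toFinset, deltaInv (f (x - y)) * deltaInv (b y)) =
      ∑ y ∈ hB.toFinset, deltaInv (g y) := by
    refine Finset.sum_congr rfl fun y _ => deltaInv_mul _ _
  rw [hsum, degree_sum_deltaInv]
  have hbot : ∀ y ∉ hB.toFinset, g y = ⊥ := by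
    intro y hy
    have : b y = ⊥ := by
      by_contra h
      exact hy (hB.mem_toFinset.mpr h)
    simp [hg, this]
  have hbdd : BddAbove (Set.range g) := by
    refine ⟨hB.toFinset.sup g, ?_⟩
    rintro v ⟨y, rfl⟩
    by_cases hy : y ∈ hB.toFinset
    · exact Finset.le_sup hy
    · rw [hbot y hy]; exact bot_le
  apply le_antisymm
  · apply ciSup_le
    intro y
    by_cases hy : y ∈ hB.toFinset
    · exact Finset.le_sup hy
    · rw [hbot y hy]; exact bot_le
  · exact Finset.sup_le fun y _ => le_ciSup hbdd y
end

section
/- Let f, b : (Fin N → ℤ) → WithBot ℕ have finite supports F and B, and let u_f, u_b : (Fin N → ℤ) × ℤ → ℝ be their umbra indicators: u_f(x, t) = 1 if t ≥ 0 and f(x) = t, and 0 otherwise (likewise u_b). Then for every x ∈ ℤ^N and t ∈ ℤ, the value of the discrete linear convolution equals the number of decompositions realizing grey value t: (u_f ⋆ u_b)(x, t) = card { y ∈ ℤ^N | f(x − y) ≠ ⊥ ∧ b(y) ≠ ⊥ ∧ f(x − y) + b(y) = t }, where (u_f ⋆ u_b)(x, t) = Σ_{y ∈ ℤ^N} Σ_{s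 ∈ ℤ} u_f(x − y, t − s) · u_b(y, s), a finite sum, and the cardinality on the right is cast from ℕ into ℝ. -/
open scoped Classical in
/-- The umbra indicator of an image `f : ℤ^N → WithBot ℕ`: `u_f (x, t) = 1` if `t ≥ 0`
and `f x` equals the natural number `t`, and `0` otherwise. -/
noncomputable def umbra {N : ℕ} (f : (Fin N → ℤ) → WithBot ℕ) :
    (Fin N → ℤ) × ℤ → ℝ :=
  fun p => if ∃ n : ℕ, (n : ℤ) = p.2 ∧ f p.1 = (n : WithBot ℕ) then 1 else 0

/-- Discrete linear convolution of functions on `ℤ^N × ℤ`: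
`(u ⋆ v)(x, t) = ∑_{y, s} u (x - y, t - s) * v (y, s)`. -/
noncomputable def conv {N : ℕ} (u v : (Fin N → ℤ) × ℤ → ℝ) :
    (Fin N → ℤ) × ℤ → ℝ :=
  fun p => ∑ᶠ (y : Fin N → ℤ), ∑ᶠ (s : ℤ), u (p.1 - y, p.2 - s) * v (y, s)

open scoped Classical in
lemma umbra_inner_sum {N : ℕ} (f b : (Fin N → ℤ) → WithBot ℕ) (x y : Fin N → ℤ) (t : ℤ) :
    (∑ᶠ (s : ℤ), umbra f (x - y, t - s) * umbra b (y, s)) =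
      if f (x - y) ≠ ⊥ ∧ b y ≠ ⊥ ∧
          ∃ n : ℕ, (n : ℤ) = t ∧ f (x - y) + b y = (n : WithBot ℕ) then 1 else 0 := by
  by_cases h : f (x - y) ≠ ⊥ ∧ b y ≠ ⊥ ∧
      ∃ n : ℕ, (n : ℤ) = t ∧ f (x - y) + b y = (n : WithBot ℕ)
  · rw [if_pos h]
    obtain ⟨hf, hb, n, hnt, hsum⟩ := h
    obtain ⟨p, hp⟩ := WithBot.ne_bot_iff_exists.mp hf
    obtain ⟨q, hq⟩ := WithBot.ne_bot_iff_exists.mp hb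
    have hpq : p + q = n := by
      rw [← hp, ← hq, ← WithBot.coe_add] at hsum
      exact WithBot.coe_inj.mp hsum
    rw [finsum_eq_single _ (q : ℤ)]
    · have h1 : umbra f (x - y, t - q) = 1 := by
        rw [umbra, if_pos]
        exact ⟨p, by omega, hp.symm⟩
      have h2 : umbra b (y, (q : ℤ)) = 1 := by
        rw [umbra, if_pos]
        exact ⟨q, rfl, hq.symm⟩
      rw [h1, h2, one_mul]
    · intro s hs
      have : umbra b (y, s) = 0 := by
        rw [umbra, if_neg]
        rintro ⟨k, hk, hbk⟩
        apply hs
        rw [← hq] at hbk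
        have : q = k := WithBot.coe_inj.mp hbk
        omega
      rw [this, mul_zero]
  · rw [if_neg h]
    apply finsum_eq_zero_of_forall_eq_zero
    intro s
    by_cases h1 : ∃ m : ℕ, (m : ℤ) = t - s ∧ f (x - y) = (m : WithBot ℕ)
    · by_cases h2 : ∃ k : ℕ, (k : ℤ) = s ∧ b y = (k : WithBot ℕ)
      · exfalso
        obtain ⟨m, hm, hfm⟩ := h1
        obtain ⟨k, hk, hbk⟩ := h2
        exact h ⟨by simp [hfm], by simp [hbk],
          ⟨m + k, by push_cast; omega, by rw [hfm, hbk]; push_cast; rfl⟩⟩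
      · have : umbra b (y, s) = 0 := by
          simp only [umbra]
          rw [if_neg]
          rintro ⟨k, hk, hbk⟩
          exact h2 ⟨k, hk, hbk⟩
        rw [this, mul_zero]
    · have : umbra f (x - y, t - s) = 0 := by
        simp only [umbra]
        rw [if_neg]
        rintro ⟨m, hm, hfm⟩
        exact h1 ⟨m, hm, hfm⟩
      rw [this, zero_mul]

/-- For finitely supported image `f` and filter `b`, the convolution of their umbra
indicators at `(x, t)` counts the decompositions `x = (x - y) + y` realizing grey
value `t`: `(u_f ⋆ u_b)(x, t) = card {y | f (x − y) ≠ ⊥ ∧ b y ≠ ⊥ ∧ f (x − y) + b y = t}`. -/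
theorem conv_umbra_eq_card (N : ℕ) (f b : (Fin N → ℤ) → WithBot ℕ)
    (hF : {x : Fin N → ℤ | f x ≠ ⊥}.Finite) (hB : {y : Fin N → ℤ | b y ≠ ⊥}.Finite)
    (x : Fin N → ℤ) (t : ℤ) :
    conv (umbra f) (umbra b) (x, t) =
      ({y : Fin N → ℤ | f (x - y) ≠ ⊥ ∧ b y ≠ ⊥ ∧
          ∃ n : ℕ, (n : ℤ) = t ∧ f (x - y) + b y = (n : WithBot ℕ)}.ncard : ℝ) := by
  classical
  set S := {y : Fin N → ℤ | f (x - y) ≠ ⊥ ∧ b y ≠ ⊥ ∧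
      ∃ n : ℕ, (n : ℤ) = t ∧ f (x - y) + b y = (n : WithBot ℕ)} with hS
  have hSfin : S.Finite := hB.subset (fun y hy => hy.2.1)
  rw [conv]
  simp only
  have : ∀ y : Fin N → ℤ, (∑ᶠ (s : ℤ), umbra f (x - y, t - s) * umbra b (y, s)) =
      if y ∈ S then 1 else 0 := fun y => umbra_inner_sum f b x y t
  rw [finsum_congr this]
  rw [finsum_eq_finset_sum_of_support_subset _ (s := hSfin.toFinset)]
  · have h1 : ∀ y ∈ hSfin.toFinset, (if y ∈ S then (1:ℝ) else 0) = 1 :=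
      fun y hy => if_pos (hSfin.mem_toFinset.mp hy)
    rw [Finset.sum_congr rfl h1, Finset.sum_const, nsmul_eq_mul, mul_one,
      Set.ncard_eq_toFinset_card S hSfin]
  · intro y hy
    simp only [Function.mem_support, ne_eq, ite_eq_right_iff, not_forall] at hy
    simp [hSfin.mem_toFinset]
    exact hy.1
end

section
/- Let f, b : (Fin N → ℤ) → WithBot ℕ have finite supports F and B, with umbra indicators u_f and u_b and their discrete linear convolution u_f ⋆ u_b. Then for every x lying in the Minkowski sum F + B = {x_F + x_B | x_F ∈ F, x_B ∈ B}, the dilation value is recovered by (f ⊕ b)(x) = the greatest t ∈ ℕ such that (u_f ⋆ u_b)(x, t) ≥ 1, where (f ⊕ b)(x) = sup_{y} ( f(x − y) + b(y) ) in WithBot ℕ. -/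
open scoped Pointwise

lemma umbra_eq_zero {N : ℕ} (f : (Fin N → ℤ) → WithBot ℕ) (p : (Fin N → ℤ) × ℤ)
    (h : ¬ ∃ n : ℕ, (n : ℤ) = p.2 ∧ f p.1 = (n : WithBot ℕ)) : umbra f p = 0 := by
  simp only [umbra]; rw [if_neg h]

lemma umbra_eq_one {N : ℕ} (f : (Fin N → ℤ) → WithBot ℕ) (p : (Fin N → ℤ) × ℤ)
    (h : ∃ n : ℕ, (n : ℤ) = p.2 ∧ f p.1 = (n : WithBot ℕ)) : umbra f p = 1 := by
  simp only [umbra]; rw [if_pos h]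

open scoped Classical in
lemma inner_sum_eq {N : ℕ} (f b : (Fin N → ℤ) → WithBot ℕ) (x y : Fin N → ℤ) (t : ℤ) :
    (∑ᶠ (s : ℤ), umbra f (x - y, t - s) * umbra b (y, s)) =
      if ∃ n : ℕ, (n : ℤ) = t ∧ f (x - y) + b y = (n : WithBot ℕ) then 1 else 0 := by
  rcases eq_or_ne (b y) ⊥ with hb | hb
  · have h0 : ∀ s : ℤ, umbra f (x - y, t - s) * umbra b (y, s) = 0 := by
      intro s
      have hno : ¬ ∃ n : ℕ, (n : ℤ) = s ∧ b y = (n : WithBot ℕ) := by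
        rintro ⟨k, _, hk⟩; simp [hb] at hk
      rw [umbra_eq_zero b _ hno, mul_zero]
    have hno2 : ¬ ∃ n : ℕ, (n : ℤ) = t ∧ f (x - y) + b y = (n : WithBot ℕ) := by
      rintro ⟨n, _, hn⟩; simp [hb] at hn
    rw [finsum_congr h0, finsum_zero, if_neg hno2]
  · obtain ⟨k, hk⟩ := WithBot.ne_bot_iff_exists.mp hb
    rcases eq_or_ne (f (x - y)) ⊥ with hf | hf
    · have h0 : ∀ s : ℤ, umbra f (x - y, t - s) * umbra b (y, s) = 0 := by
        intro s
        have hno : ¬ ∃ n : ℕ, (n : ℤ) = t - s ∧ f (x - y) = (n : WithBot ℕ) := by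
          rintro ⟨m, _, hm⟩; simp [hf] at hm
        rw [umbra_eq_zero f _ hno, zero_mul]
      have hno2 : ¬ ∃ n : ℕ, (n : ℤ) = t ∧ f (x - y) + b y = (n : WithBot ℕ) := by
        rintro ⟨n, _, hn⟩; simp [hf] at hn
      rw [finsum_congr h0, finsum_zero, if_neg hno2]
    · obtain ⟨m, hm⟩ := WithBot.ne_bot_iff_exists.mp hf
      rw [finsum_eq_single _ (k : ℤ)]
      · have hbk : ∃ n : ℕ, (n : ℤ) = ((k : ℤ)) ∧ b y = (n : WithBot ℕ) :=
          ⟨k, rfl, by rw [← hk, Nat.cast_withBot]⟩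
        rw [umbra_eq_one b (y, (k : ℤ)) hbk, mul_one]
        by_cases hcond : (m : ℤ) = t - k
        · have h1 : ∃ n : ℕ, (n : ℤ) = t - (k : ℤ) ∧ f (x - y) = (n : WithBot ℕ) :=
            ⟨m, hcond, by rw [← hm, Nat.cast_withBot]⟩
          have h2 : ∃ n : ℕ, (n : ℤ) = t ∧ f (x - y) + b y = (n : WithBot ℕ) := by
            refine ⟨m + k, by omega, ?_⟩
            rw [← hm, ← hk, Nat.cast_withBot]
            push_cast; rfl
          rw [umbra_eq_one f _ h1, if_pos h2]
        · have h1 : ¬ ∃ n : ℕ, (n : ℤ) = t - (k : ℤ) ∧ f (x - y) = (n : WithBot ℕ) := by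
            rintro ⟨m', hm', hm''⟩
            rw [← hm, Nat.cast_withBot] at hm''
            have hmm : m = m' := by exact_mod_cast hm''
            omega
          have h2 : ¬ ∃ n : ℕ, (n : ℤ) = t ∧ f (x - y) + b y = (n : WithBot ℕ) := by
            rintro ⟨n, hn, hn'⟩
            rw [← hm, ← hk, Nat.cast_withBot] at hn'
            have hsum : ((m + k : ℕ) : WithBot ℕ) = (n : WithBot ℕ) := by
              rw [Nat.cast_withBot]; push_cast; exact hn'
            have : m + k = n := by exact_mod_cast hsum
            omega
          rw [umbra_eq_zero f _ h1, if_neg h2]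
      · intro s hs
        have hno : ¬ ∃ n : ℕ, (n : ℤ) = s ∧ b y = (n : WithBot ℕ) := by
          rintro ⟨k', hk', hk''⟩
          rw [← hk, Nat.cast_withBot] at hk''
          have : k = k' := by exact_mod_cast hk''
          exact hs (by omega)
        rw [umbra_eq_zero b _ hno, mul_zero]

open scoped Classical in
lemma conv_eq_indicator_sum {N : ℕ} (f b : (Fin N → ℤ) → WithBot ℕ) (x : Fin N → ℤ) (t : ℤ) :
    conv (umbra f) (umbra b) (x, t) =
      ∑ᶠ (y : Fin N → ℤ),
        (if ∃ n : ℕ, (n : ℤ) = t ∧ f (x - y) + b y = (n : WithBot ℕ) then (1 : ℝ) else 0) := by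
  unfold conv
  exact finsum_congr fun y => inner_sum_eq f b x y t

lemma conv_ge_one_iff {N : ℕ} (f b : (Fin N → ℤ) → WithBot ℕ)
    (hB : {y : Fin N → ℤ | b y ≠ ⊥}.Finite) (x : Fin N → ℤ) (t : ℤ) :
    1 ≤ conv (umbra f) (umbra b) (x, t) ↔
      ∃ y, ∃ n : ℕ, (n : ℤ) = t ∧ f (x - y) + b y = (n : WithBot ℕ) := by
  classical
  rw [conv_eq_indicator_sum]
  set J : (Fin N → ℤ) → ℝ := fun y =>
    if ∃ n : ℕ, (n : ℤ) = t ∧ f (x - y) + b y = (n : WithBot ℕ) then (1 : ℝ) else 0 with hJ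
  have hsupp : (Function.support J).Finite := by
    refine hB.subset fun y hy => ?_
    simp only [Function.mem_support, hJ] at hy
    by_contra hby
    simp only [Set.mem_setOf_eq, not_not] at hby
    apply hy
    have hno : ¬ ∃ n : ℕ, (n : ℤ) = t ∧ f (x - y) + b y = (n : WithBot ℕ) := by
      rintro ⟨n, _, hn⟩; simp [hby] at hn
    rw [if_neg hno]
  constructor
  · intro h
    by_contra hno
    push_neg at hno
    have hz : ∀ y, J y = 0 := by
      intro y
      have hn2 : ¬ ∃ n : ℕ, (n : ℤ) = t ∧ f (x - y) + b y = (n : WithBot ℕ) := by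
        rintro ⟨n, hn, hn'⟩
        exact absurd hn' (hno y n hn)
      simp only [hJ]; rw [if_neg hn2]
    rw [finsum_congr hz, finsum_zero] at h
    linarith
  · rintro ⟨y, hy⟩
    have h1 : J y = 1 := by simp only [hJ]; rw [if_pos hy]
    calc (1 : ℝ) = J y := h1.symm
      _ ≤ ∑ᶠ y, J y := single_le_finsum y hsupp (fun j => by
          simp only [hJ]; split <;> norm_num)

/-- For every `x` in the Minkowski sum `F + B` of the supports of `f` and `b`, the
dilation value `(f ⊕ b)(x) = ⨆ y, f (x - y) + b y` is the greatest natural number `t`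
such that `(u_f ⋆ u_b)(x, t) ≥ 1`. -/
theorem dilation_eq_greatest_conv_pos (N : ℕ) (f b : (Fin N → ℤ) → WithBot ℕ)
    (hF : {x : Fin N → ℤ | f x ≠ ⊥}.Finite) (hB : {y : Fin N → ℤ | b y ≠ ⊥}.Finite)
    (x : Fin N → ℤ)
    (hx : x ∈ {x : Fin N → ℤ | f x ≠ ⊥} + {y : Fin N → ℤ | b y ≠ ⊥}) :
    ∃ n : ℕ, (⨆ y : Fin N → ℤ, f (x - y) + b y) = (n : WithBot ℕ) ∧
      IsGreatest {t : ℕ | 1 ≤ conv (umbra f) (umbra b) (x, (t : ℤ))} n := by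
    classical
  set g : (Fin N → ℤ) → WithBot ℕ := fun y => f (x - y) + b y with hg
  set T : Set ℕ := {m : ℕ | ∃ y, g y = (m : WithBot ℕ)} with hT
  have hTfin : T.Finite := by
    have hsub : T ⊆ (fun y => WithBot.unbotD 0 (g y)) '' {y | b y ≠ ⊥} := by
      rintro m ⟨y, hy⟩
      refine ⟨y, ?_, by show WithBot.unbotD 0 (g y) = m; rw [hy, Nat.cast_withBot]; rfl⟩
      intro hby
      have hgb : g y = ⊥ := by simp [hg, hby]
      rw [hgb] at hy
      exact absurd hy (by simp)
    exact ((hB.image _).subset hsub)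
  obtain ⟨xF, hxF, xB, hxB, hxsum⟩ := hx
  have hTne : T.Nonempty := by
    obtain ⟨m, hm⟩ := WithBot.ne_bot_iff_exists.mp hxF
    obtain ⟨k, hk⟩ := WithBot.ne_bot_iff_exists.mp hxB
    refine ⟨m + k, xB, ?_⟩
    have hxy : x - xB = xF := by
      rw [← hxsum]; exact add_sub_cancel_right xF xB
    show f (x - xB) + b xB = ((m + k : ℕ) : WithBot ℕ)
    rw [hxy, ← hm, ← hk, Nat.cast_withBot]; push_cast; rfl
  obtain ⟨n, hnT, hnmax'⟩ := Set.exists_max_image T id hTfin hTne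
  have hnmax : ∀ m ∈ T, m ≤ n := fun m hm => by simpa using hnmax' m hm
  obtain ⟨yn, hyn⟩ := hnT
  have hbound : ∀ y, g y ≤ (n : WithBot ℕ) := by
    intro y
    rcases eq_or_ne (g y) ⊥ with h | h
    · rw [h]; exact bot_le
    · obtain ⟨m, hm⟩ := WithBot.ne_bot_iff_exists.mp h
      rw [← hm, Nat.cast_withBot]
      exact_mod_cast hnmax m ⟨y, hm.symm ▸ by rw [Nat.cast_withBot]⟩
  refine ⟨n, ?_, ?_⟩
  · apply le_antisymm
    · exact ciSup_le hbound
    · rw [← hyn]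
      exact le_ciSup ⟨(n : WithBot ℕ), by rintro _ ⟨y, rfl⟩; exact hbound y⟩ yn
  · constructor
    · rw [Set.mem_setOf_eq, conv_ge_one_iff f b hB]
      exact ⟨yn, n, rfl, hyn⟩
    · intro t ht
      rw [Set.mem_setOf_eq, conv_ge_one_iff f b hB] at ht
      obtain ⟨y, n', hn', hy⟩ := ht
      have hnt : n' = t := by exact_mod_cast hn'
      subst hnt
      exact hnmax n' ⟨y, hy⟩
end
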